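/- arXiv:2509.14073 — 2 statements merged into one kernel-verified Lean document; each statement's English description precedes it below -/
import Mathlib

section
/- For every τ > 0, Σ_{n=1}^∞ (−1)^{n−1} n sin(2πn/3) exp(−(2π/3) n² τ) = (3√6 / (8 τ^{3/2})) · Σ_{k∈ℤ} (k + 1/6) exp(−(3π/(2τ)) (k + 1/6)²), where the sum over ℤ converges absolutely. -/
open Real Filter

section aux
open Complex

/-- per-term identity for the dual (transformed) series -/
private lemma dual_term_eq (τ : ℝ) (hτ : 0 < τ) (n : ℤ) :
    jacobiTheta₂'_term n ((-(1/(4*τ)) : ℝ) * I) ((3/(2*τ) : ℝ) * I)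
      - (π * I / 3) * jacobiTheta₂_term n ((-(1/(4*τ)) : ℝ) * I) ((3/(2*τ) : ℝ) * I)
    = (2 * π * Real.exp (π/(24*τ)) : ℝ) * I *
        ((((n:ℝ) - 1/6) * Real.exp (-(3*π/(2*τ)) * ((n:ℝ)-1/6)^2) : ℝ)) := by
  have hne : τ ≠ 0 := hτ.ne'
  have hexp : (2 * ↑π * I * ↑n * ((-(1/(4*τ)) : ℝ) * I) + ↑π * I * ↑n^2 * ((3/(2*τ) : ℝ) * I) : ℂ)
      = ((π * n/(2*τ) - 3*π*n^2/(2*τ) : ℝ) : ℂ) := by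
    push_cast
    field_simp
    ring_nf
    rw [I_sq]
    ring
  rw [jacobiTheta₂'_term, jacobiTheta₂_term, hexp, ← Complex.ofReal_exp]
  have hre : Real.exp (π * n/(2*τ) - 3*π*n^2/(2*τ))
      = Real.exp (π/(24*τ)) * Real.exp (-(3*π/(2*τ)) * ((n:ℝ)-1/6)^2) := by
    rw [← Real.exp_add]
    congr 1
    field_simp
    ring
  rw [hre]
  push_cast
  ring

/-- real part of the terms of the original series -/
private lemma lhs_term_re (τ : ℝ) (n : ℤ) :
    (jacobiTheta₂'_term n (1/6 : ℂ) (((2*τ/3 : ℝ)) * I)).re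
      = -(2*π) * ((n:ℝ) * Real.sin (π*n/3) * Real.exp (-(2*π/3)*n^2*τ)) := by
  have he : 2*(π:ℂ)*I*(n:ℂ)*(1/6 : ℂ) + (π:ℂ)*I*(n:ℂ)^2*(((2*τ/3 : ℝ)) * I)
      = ((-(2*π/3)*n^2*τ : ℝ) : ℂ) + ((π*n/3 : ℝ):ℂ) * I := by
    push_cast
    ring_nf
    rw [I_sq]
    ring
  rw [jacobiTheta₂'_term, jacobiTheta₂_term, he, Complex.exp_add, ← Complex.ofReal_exp,
    Complex.exp_mul_I, ← Complex.ofReal_cos, ← Complex.ofReal_sin]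
  simp only [mul_re, mul_im, add_re, add_im, I_re, I_im, ofReal_re, ofReal_im, intCast_re,
    intCast_im, Complex.re_ofNat, Complex.im_ofNat]
  ring

private lemma scalar_eval (A b E₁ E₂ S : ℝ) (hA : A ≠ 0) (hb : b ≠ 0) (hE : E₁ * E₂ = 1) :
    1 / (A:ℂ) * (E₁:ℂ) / ((b:ℂ) * I) * (((2*π*E₂ : ℝ):ℂ) * I * ((-S : ℝ):ℂ))
      = ((-(2*π)*S/(A*b) : ℝ):ℂ) := by
  have hAc : (A:ℂ) ≠ 0 := by exact_mod_cast hA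
  have hbc : (b:ℂ) ≠ 0 := by exact_mod_cast hb
  have hEc : (E₁:ℂ) * (E₂:ℂ) = 1 := by exact_mod_cast hE
  have h2 : (I:ℂ) ≠ 0 := I_ne_zero
  push_cast
  field_simp
  linear_combination (-(S:ℂ)) * hEc

end aux

/-- `f τ = Σ_{n=1}^∞ (−1)^{n−1} n sin(2πn/3) exp(−(2π/3) n² τ)`. The `n = 0` term vanishes,
and for `n ≥ 1` one has `(−1)^{n+1} = (−1)^{n−1}`. -/
noncomputable def f (τ : ℝ) : ℝ :=
  ∑' n : ℕ, (-1 : ℝ) ^ (n + 1) * n * Real.sin (2 * π * n / 3) * Real.exp (-(2 * π / 3) * n ^ 2 * τ)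

open Complex in
/-- Poisson summation (theta transformation) of `f`: for every `τ > 0`,
`f(τ) = (3√6 / (8 τ^{3/2})) Σ_{k∈ℤ} (k + 1/6) exp(−(3π/(2τ)) (k + 1/6)²)`,
and the sum over `ℤ` converges absolutely. -/
theorem f_eq_open_channel_sum (τ : ℝ) (hτ : 0 < τ) :
    Summable (fun k : ℤ =>
      |((k : ℝ) + 1 / 6) * Real.exp (-(3 * π / (2 * τ)) * ((k : ℝ) + 1 / 6) ^ 2)|)
    ∧ f τ = 3 * Real.sqrt 6 / (8 * τ ^ ((3 : ℝ) / 2)) *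
        ∑' k : ℤ, ((k : ℝ) + 1 / 6) * Real.exp (-(3 * π / (2 * τ)) * ((k : ℝ) + 1 / 6) ^ 2) := by
  have hne : τ ≠ 0 := hτ.ne'
  have hc : (τ:ℂ) ≠ 0 := by exact_mod_cast hne
  -- notation
  set t : ℂ := ((2*τ/3 : ℝ)) * I with ht_def
  set w : ℂ := ((-(1/(4*τ)) : ℝ)) * I with hw_def
  set τ' : ℂ := ((3/(2*τ) : ℝ)) * I with hτ'_def
  have himt : 0 < t.im := by
    rw [ht_def]
    simp only [Complex.mul_im, Complex.I_im, Complex.I_re, Complex.ofReal_re,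
      Complex.ofReal_im, mul_one, mul_zero, zero_mul, add_zero, zero_add]
    linarith
  have him' : 0 < τ'.im := by
    rw [hτ'_def]
    simp only [Complex.mul_im, Complex.I_im, Complex.I_re, Complex.ofReal_re,
      Complex.ofReal_im, mul_one, mul_zero, zero_mul, add_zero, zero_add]
    exact div_pos (by norm_num) (by linarith)
  have ht0 : t ≠ 0 := by
    intro h; rw [Complex.ext_iff] at h; simp [ht_def] at h; nlinarith
  -- summability of the dual series
  have Sθ' : Summable (fun n : ℤ => jacobiTheta₂'_term n w τ') :=
    (summable_jacobiTheta₂'_term_iff w τ').mpr him'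
  have Sθ : Summable (fun n : ℤ => jacobiTheta₂_term n w τ') :=
    (summable_jacobiTheta₂_term_iff w τ').mpr him'
  have Sg : Summable (fun n : ℤ =>
      jacobiTheta₂'_term n w τ' - ((π:ℂ) * I / 3) * jacobiTheta₂_term n w τ') :=
    Sθ'.sub (Sθ.mul_left _)
  have Snorm : Summable (fun n : ℤ =>
      ‖jacobiTheta₂'_term n w τ' - ((π:ℂ) * I / 3) * jacobiTheta₂_term n w τ'‖) := Sg.norm
  have hnorm_eq : ∀ n : ℤ,
      ‖jacobiTheta₂'_term n w τ' - ((π:ℂ) * I / 3) * jacobiTheta₂_term n w τ'‖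
      = (2 * π * Real.exp (π/(24*τ))) *
          |(((n:ℝ) - 1/6) * Real.exp (-(3*π/(2*τ)) * ((n:ℝ)-1/6)^2))| := by
    intro n
    rw [hw_def, hτ'_def, dual_term_eq τ hτ n]
    simp only [norm_mul, Complex.norm_real, Complex.norm_I, Real.norm_eq_abs, mul_one]
    rw [abs_mul, (by norm_num : |(2:ℝ)| = 2), abs_of_pos Real.pi_pos, abs_of_pos (Real.exp_pos (π/(24*τ))),
      abs_of_pos (Real.exp_pos (-(3*π/(2*τ)) * (((n:ℝ))-1/6)^2))]
  have Sabs1 : Summable (fun n : ℤ =>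
      |(((n:ℝ) - 1/6) * Real.exp (-(3*π/(2*τ)) * ((n:ℝ)-1/6)^2))|) := by
    have h := Snorm
    simp_rw [hnorm_eq] at h
    exact (summable_mul_left_iff (by positivity)).mp h
  have Habs : Summable (fun k : ℤ =>
      |((k : ℝ) + 1 / 6) * Real.exp (-(3 * π / (2 * τ)) * ((k : ℝ) + 1 / 6) ^ 2)|) := by
    refine (Sabs1.comp_injective neg_injective).congr fun k => ?_
    have h1 : (((-k : ℤ)):ℝ) - 1/6 = -(((k:ℝ)) + 1/6) := by push_cast; ring
    simp only [Function.comp_apply, h1, neg_sq, neg_mul, abs_neg]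
  refine ⟨Habs, ?_⟩
  set S : ℝ := ∑' k : ℤ, ((k : ℝ) + 1 / 6) * Real.exp (-(3 * π / (2 * τ)) * ((k : ℝ) + 1 / 6) ^ 2)
    with hS_def
  -- value of the dual sum
  have htsumg : ∑' n : ℤ,
      (jacobiTheta₂'_term n w τ' - ((π:ℂ) * I / 3) * jacobiTheta₂_term n w τ')
      = ((2 * π * Real.exp (π/(24*τ)) : ℝ) : ℂ) * I * ((-S : ℝ) : ℂ) := by
    have h1 : ∀ n : ℤ,
        jacobiTheta₂'_term n w τ' - ((π:ℂ) * I / 3) * jacobiTheta₂_term n w τ'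
        = ((2 * π * Real.exp (π/(24*τ)) : ℝ) : ℂ) * I *
            (((((n:ℝ) - 1/6) * Real.exp (-(3*π/(2*τ)) * ((n:ℝ)-1/6)^2) : ℝ)) : ℂ) := by
      intro n; rw [hw_def, hτ'_def]; exact dual_term_eq τ hτ n
    rw [tsum_congr h1, tsum_mul_left]
    congr 1
    rw [← Complex.ofReal_tsum]
    congr 1
    have h2 : ∑' n : ℤ, (((n:ℝ) - 1/6) * Real.exp (-(3*π/(2*τ)) * ((n:ℝ)-1/6)^2)) = -S := by
      rw [← (Equiv.neg ℤ).tsum_eq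
        (fun n : ℤ => (((n:ℝ) - 1/6) * Real.exp (-(3*π/(2*τ)) * ((n:ℝ)-1/6)^2))), hS_def,
        ← tsum_neg]
      congr 1 with k
      have h1 : (((-k : ℤ)):ℝ) - 1/6 = -(((k:ℝ)) + 1/6) := by push_cast; ring
      simp only [Equiv.neg_apply, h1, neg_sq, neg_mul]
    rw [h2]
  -- functional equation specialization
  have hz : (1/6 : ℂ) / t = w := by
    rw [div_eq_iff ht0, ht_def, hw_def]
    push_cast
    field_simp
    ring_nf
    rw [I_sq]
    ring
  have hτ'eq : (-1 : ℂ) / t = τ' := by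
    rw [div_eq_iff ht0, ht_def, hτ'_def]
    push_cast
    field_simp
    ring_nf
    rw [I_sq]
  have hsqrt : (-I * t) ^ (1/2 : ℂ) = (((2*τ/3) ^ ((1:ℝ)/2) : ℝ) : ℂ) := by
    have h1 : -I * t = ((2*τ/3 : ℝ) : ℂ) := by
      rw [ht_def]; push_cast; ring_nf; rw [I_sq]; ring
    rw [h1, show (1/2 : ℂ) = (((1:ℝ)/2 : ℝ) : ℂ) by norm_num]
    exact (Complex.ofReal_cpow (by positivity) _).symm
  have hexpfac : cexp (-↑π * I * (1/6 : ℂ)^2 / t) = ((Real.exp (-π/(24*τ)) : ℝ) : ℂ) := by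
    have harg : (-↑π * I * (1/6 : ℂ)^2 / t) = ((-π/(24*τ) : ℝ) : ℂ) := by
      rw [div_eq_iff ht0, ht_def]
      push_cast
      field_simp
      ring_nf
      all_goals ring
    rw [harg, Complex.ofReal_exp]
  have hbracket : jacobiTheta₂' w τ' - 2*(π:ℂ)*I*(1/6 : ℂ) * jacobiTheta₂ w τ'
      = ∑' n : ℤ, (jacobiTheta₂'_term n w τ' - ((π:ℂ) * I / 3) * jacobiTheta₂_term n w τ') := by
    rw [show 2*(π:ℂ)*I*(1/6 : ℂ) = (π:ℂ)*I/3 by ring, jacobiTheta₂', jacobiTheta₂,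
      ← tsum_mul_left, ← Summable.tsum_sub Sθ' (Sθ.mul_left _)]
  have hFE := jacobiTheta₂'_functional_equation (1/6 : ℂ) t
  rw [hz, hτ'eq, hsqrt, hexpfac, hbracket, htsumg] at hFE
  -- evaluate the scalar factor
  have hθval : jacobiTheta₂' (1/6 : ℂ) t
      = ((-(2*π) * S / ((2*τ/3) ^ ((1:ℝ)/2) * (2*τ/3)) : ℝ) : ℂ) := by
    rw [hFE, ht_def]
    exact scalar_eval _ _ _ _ _ (Real.rpow_pos_of_pos (by linarith) _).ne'
      (by intro hcon; nlinarith)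
      (by rw [← Real.exp_add, show -π/(24*τ) + π/(24*τ) = 0 by ring, Real.exp_zero])
  -- take real parts
  have hterm_sum : Summable (fun n : ℤ => jacobiTheta₂'_term n (1/6 : ℂ) t) :=
    (summable_jacobiTheta₂'_term_iff _ _).mpr himt
  have hre : ∑' n : ℤ, (jacobiTheta₂'_term n (1/6 : ℂ) t).re
      = -(2*π) * S / ((2*τ/3) ^ ((1:ℝ)/2) * (2*τ/3)) := by
    rw [← Complex.re_tsum hterm_sum]
    have : ∑' n : ℤ, jacobiTheta₂'_term n (1/6 : ℂ) t = jacobiTheta₂' (1/6 : ℂ) t := rfl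
    rw [this, hθval, Complex.ofReal_re]
  have hre_sum : Summable (fun n : ℤ => (jacobiTheta₂'_term n (1/6 : ℂ) t).re) := by
    refine Summable.of_norm_bounded hterm_sum.norm fun n => ?_
    rw [Real.norm_eq_abs]
    exact Complex.abs_re_le_norm _
  -- the real series over ℤ
  set h : ℤ → ℝ := fun n => (n:ℝ) * Real.sin (π*n/3) * Real.exp (-(2*π/3)*n^2*τ) with hh_def
  have hterm_re : ∀ n : ℤ, (jacobiTheta₂'_term n (1/6 : ℂ) t).re = -(2*π) * h n := by
    intro n; rw [ht_def, hh_def]; exact lhs_term_re τ n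
  have hhZ : Summable h := by
    have := hre_sum
    simp_rw [hterm_re] at this
    exact (summable_mul_left_iff (a := -(2*π)) (by
      have := Real.pi_pos; intro hcon; nlinarith)).mp this
  have hZval : ∑' n : ℤ, h n = S / ((2*τ/3) ^ ((1:ℝ)/2) * (2*τ/3)) := by
    have h1 : ∑' n : ℤ, (-(2*π) * h n) = -(2*π) * (S / ((2*τ/3) ^ ((1:ℝ)/2) * (2*τ/3))) := by
      rw [← tsum_congr hterm_re, hre]; ring
    rw [tsum_mul_left] at h1
    have hπ : (-(2*π) : ℝ) ≠ 0 := by have := Real.pi_pos; intro hcon; nlinarith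
    exact mul_left_cancel₀ hπ (by rw [h1])
  -- split ℤ-sum into ℕ-sums
  have hnat : Summable (fun n : ℕ => h n) := hhZ.comp_injective fun a b hab => by exact_mod_cast hab
  have hneg : Summable (fun n : ℕ => h (-((n:ℤ)+1))) :=
    hhZ.comp_injective fun a b hab => by omega
  have heven : ∀ n : ℕ, h (-((n:ℤ)+1)) = h ((n:ℤ)+1) := by
    intro n
    rw [hh_def]
    push_cast
    rw [show π*(-((n:ℝ)+1))/3 = -(π*((n:ℝ)+1)/3) by ring, Real.sin_neg,
      show (-((n:ℝ)+1))^2 = ((n:ℝ)+1)^2 by ring]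
    ring
  have h0 : h 0 = 0 := by simp [hh_def]
  have hshift : ∑' n : ℕ, h (-((n:ℤ)+1)) = ∑' n : ℕ, h n := by
    rw [tsum_congr heven]
    have h2 := Summable.tsum_eq_zero_add hnat
    norm_num [h0] at h2
    rw [← h2]
  have hsplit : ∑' n : ℤ, h n = 2 * ∑' n : ℕ, h n := by
    rw [tsum_of_nat_of_neg_add_one hnat hneg, hshift]; ring
  -- identify f
  have hf : f τ = ∑' n : ℕ, h n := by
    rw [f]
    congr 1 with n
    have hs : Real.sin (2*π*n/3) = -((-1:ℝ)^n * Real.sin (π*n/3)) := by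
      have h := Real.sin_nat_mul_pi_sub (π*n/3) n
      rw [show (n:ℝ)*π - π*n/3 = 2*π*n/3 by ring] at h
      exact h
    have hpow : (-1:ℝ)^(n+1) * (-1:ℝ)^n = -1 := by
      rw [← pow_add, show n+1+n = 2*n+1 by ring, pow_succ, pow_mul]
      norm_num
    rw [hh_def, hs]
    push_cast
    linear_combination (-(n:ℝ) * Real.sin (π*n/3) * Real.exp (-(2*π/3)*n^2*τ)) * hpow
  -- final arithmetic
  have hA : ((2*τ/3) : ℝ) ^ ((1:ℝ)/2) = Real.sqrt (2*τ/3) := (Real.sqrt_eq_rpow _).symm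
  have h6 : Real.sqrt 6 * Real.sqrt (2*τ/3) = 2 * Real.sqrt τ := by
    rw [← Real.sqrt_mul (by norm_num), show (6:ℝ)*(2*τ/3) = 2^2*τ by ring,
      Real.sqrt_mul (by positivity), Real.sqrt_sq (by norm_num)]
  have hτ32 : τ ^ ((3:ℝ)/2) = τ * Real.sqrt τ := by
    rw [show (3:ℝ)/2 = 1 + 1/2 by norm_num, Real.rpow_add hτ, Real.rpow_one,
      ← Real.sqrt_eq_rpow]
  have hsτ : (0:ℝ) < Real.sqrt τ := Real.sqrt_pos.mpr hτ
  have hs23 : (0:ℝ) < Real.sqrt (2*τ/3) := Real.sqrt_pos.mpr (by linarith)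
  have hfinal : (1:ℝ)/(2*(Real.sqrt (2*τ/3)*(2*τ/3)))
      = 3*Real.sqrt 6/(8*(τ*Real.sqrt τ)) := by
    rw [div_eq_div_iff (by positivity) (by positivity)]
    linear_combination (-4*τ) * h6
  have hfτ : f τ = (∑' n : ℤ, h n)/2 := by rw [hf]; linarith [hsplit]
  rw [hfτ, hZval, hA, hτ32, ← hfinal]
  ring
end

section
/- For every real x, the complex-valued double integral ∫₀^∞ ∫₀^∞ L e^{−L} b^{ix} / (b + L)² db dL converges absolutely and equals π x Γ(1 + ix) / sinh(πx), where b^{ix} := exp(i x log b), Γ is the complex Gamma function, and for x = 0 the right-hand side is interpreted as its limit value 1. -/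
open Real MeasureTheory Set Complex

noncomputable def gmap (L t : ℝ) : ℝ := L * t / (1 - t)

lemma gmap_image {L : ℝ} (hL : 0 < L) : gmap L '' Ioo 0 1 = Ioi 0 := by
  ext b
  constructor
  · rintro ⟨t, ⟨ht0, ht1⟩, rfl⟩
    exact div_pos (mul_pos hL ht0) (by linarith)
  · intro hb
    rw [mem_Ioi] at hb
    have hbL : 0 < b + L := by linarith
    refine ⟨b / (b + L), ⟨div_pos hb hbL, (div_lt_one hbL).mpr (by linarith)⟩, ?_⟩
    have h1 : 1 - b / (b + L) = L / (b + L) := by field_simp; ring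
    rw [gmap, h1]
    field_simp

lemma gmap_injOn {L : ℝ} (hL : 0 < L) : InjOn (gmap L) (Ioo 0 1) := by
  rintro t1 ⟨h10, h11⟩ t2 ⟨h20, h21⟩ h
  have e1 : (1 : ℝ) - t1 ≠ 0 := by linarith
  have e2 : (1 : ℝ) - t2 ≠ 0 := by linarith
  rw [gmap, gmap, div_eq_div_iff e1 e2] at h
  nlinarith [hL]

lemma gmap_deriv {L : ℝ} (t : ℝ) (ht : t ∈ Ioo (0:ℝ) 1) :
    HasDerivWithinAt (gmap L) (L / (1 - t) ^ 2) (Ioo 0 1) t := by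
  have hne : (1 : ℝ) - t ≠ 0 := by rw [mem_Ioo] at ht; linarith [ht.2]
  have h1 : HasDerivAt (fun s : ℝ => L * s) L t := by
    simpa using (hasDerivAt_id t).const_mul L
  have h2 : HasDerivAt (fun s : ℝ => 1 - s) (-1) t := by
    simpa using ((hasDerivAt_id t).const_sub 1)
  have := h1.div h2 hne
  have heq : (L * (1 - t) - L * t * -1) / (1 - t) ^ 2 = L / (1 - t) ^ 2 := by
    congr 1; ring
  rw [heq] at this
  exact this.hasDerivWithinAt

lemma gmap_subst {L : ℝ} (hL : 0 < L) {F : Type*} [NormedAddCommGroup F] [NormedSpace ℝ F]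
    (f : ℝ → F) :
    (IntegrableOn f (Ioi 0) ↔
      IntegrableOn (fun t => |L / (1 - t) ^ 2| • f (gmap L t)) (Ioo 0 1)) ∧
    ∫ b in Ioi (0:ℝ), f b = ∫ t in Ioo (0:ℝ) 1, |L / (1 - t) ^ 2| • f (gmap L t) := by
  constructor
  · rw [← gmap_image hL]
    exact integrableOn_image_iff_integrableOn_abs_deriv_smul measurableSet_Ioo
      (fun t ht => gmap_deriv t ht) (gmap_injOn hL) f
  · rw [← gmap_image hL]
    exact integral_image_eq_integral_abs_deriv_smul measurableSet_Ioo
      (fun t ht => gmap_deriv t ht) (gmap_injOn hL) f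

lemma gmap_add {L : ℝ} {t : ℝ} (ht : t ∈ Ioo (0:ℝ) 1) :
    gmap L t + L = L / (1 - t) := by
  rw [mem_Ioo] at ht
  have : (1:ℝ) - t ≠ 0 := by linarith [ht.2]
  rw [gmap]; field_simp; ring

/-- Norm integral: `∫₀^∞ (b+L)⁻² db = L⁻¹`. -/
lemma norm_int {L : ℝ} (hL : 0 < L) :
    IntegrableOn (fun b : ℝ => ((b + L) ^ 2)⁻¹) (Ioi 0) ∧
    ∫ b in Ioi (0:ℝ), ((b + L) ^ 2)⁻¹ = L⁻¹ := by
  obtain ⟨hiff, heq⟩ := gmap_subst hL (fun b : ℝ => ((b + L) ^ 2)⁻¹)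
  have hEq : EqOn (fun t : ℝ => |L / (1 - t) ^ 2| • ((gmap L t + L) ^ 2)⁻¹)
      (fun _ : ℝ => L⁻¹) (Ioo 0 1) := by
    intro t ht
    have ht' := ht
    rw [mem_Ioo] at ht'
    have h1 : (0:ℝ) < 1 - t := by linarith [ht'.2]
    simp only
    rw [gmap_add ht, abs_of_pos (by positivity), smul_eq_mul, div_pow]
    field_simp
  constructor
  · rw [hiff]
    exact ((integrableOn_const_iff).mpr (Or.inr (by simp))).congr_fun hEq.symm measurableSet_Ioo
  · rw [heq, setIntegral_congr_fun measurableSet_Ioo hEq]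
    simp [Real.volume_Ioo]

/-- Inner integral in terms of Gamma. -/
lemma inner_int (x : ℝ) {L : ℝ} (hL : 0 < L) :
    IntegrableOn (fun b : ℝ => Complex.exp (Complex.I * x * Real.log b) / ((b:ℂ) + L) ^ 2)
      (Ioi 0) ∧
    ∫ b in Ioi (0:ℝ), Complex.exp (Complex.I * x * Real.log b) / ((b:ℂ) + L) ^ 2
      = Complex.exp (Complex.I * x * Real.log L) / L *
        (Complex.Gamma (1 + Complex.I * x) * Complex.Gamma (1 - Complex.I * x)) := by
  set f : ℝ → ℂ := fun b => Complex.exp (Complex.I * x * Real.log b) / ((b:ℂ) + L) ^ 2 with hf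
  set K : ℂ := Complex.exp (Complex.I * x * Real.log L) / L with hK
  set g : ℝ → ℂ := fun t => (t:ℂ) ^ (Complex.I * x) * ((1:ℂ) - t) ^ (-(Complex.I * x)) with hg
  -- pointwise identity on Ioo 0 1
  have hEq : EqOn (fun t : ℝ => |L / (1 - t) ^ 2| • f (gmap L t))
      (fun t : ℝ => K * g t) (Ioo 0 1) := by
    intro t ht
    have ht' := ht
    rw [mem_Ioo] at ht'
    obtain ⟨ht0, ht1⟩ := ht'
    have h1t : (0:ℝ) < 1 - t := by linarith
    have hgt : 0 < gmap L t := by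
      rw [gmap]; exact div_pos (mul_pos hL ht0) h1t
    have hlog : Real.log (gmap L t) = Real.log L + Real.log t - Real.log (1 - t) := by
      rw [gmap, Real.log_div (by positivity) h1t.ne', Real.log_mul hL.ne' ht0.ne']
    have hden : ((gmap L t : ℂ) + L) = (L:ℂ) / ((1:ℂ) - t) := by
      have := gmap_add (L := L) ht
      rw [show ((gmap L t : ℂ) + L) = ((gmap L t + L : ℝ) : ℂ) by push_cast; ring, this]
      push_cast
      ring
    have hcp1 : (t:ℂ) ^ (Complex.I * x) = Complex.exp (Complex.I * x * Real.log t) := by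
      rw [Complex.cpow_def_of_ne_zero (by exact_mod_cast ht0.ne'),
        ← Complex.ofReal_log ht0.le, mul_comm]
    have hcp2 : ((1:ℂ) - t) ^ (-(Complex.I * x))
        = (Complex.exp (Complex.I * x * Real.log (1 - t)))⁻¹ := by
      rw [show ((1:ℂ) - t) = ((1 - t : ℝ) : ℂ) by push_cast; ring,
        Complex.cpow_def_of_ne_zero (by exact_mod_cast h1t.ne'),
        ← Complex.ofReal_log h1t.le, ← Complex.exp_neg]
      congr 1
      ring
    simp only [hf, hg, hK, hcp1, hcp2]
    rw [hden, hlog]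
    have hLne : (L:ℂ) ≠ 0 := by exact_mod_cast hL.ne'
    have h1tne : ((1:ℂ) - t) ≠ 0 := by
      rw [show ((1:ℂ) - t) = ((1 - t : ℝ) : ℂ) by push_cast; ring]
      exact_mod_cast h1t.ne'
    rw [abs_of_pos (by positivity), Complex.real_smul]
    push_cast
    rw [mul_sub, mul_add, Complex.exp_sub, Complex.exp_add]
    field_simp [Complex.exp_ne_zero]
  have hu : 0 < (1 + Complex.I * x).re := by simp
  have hv : 0 < (1 - Complex.I * x).re := by simp
  -- beta integrand identities
  have hbeta_fun : ∀ t : ℝ, (t:ℂ) ^ (1 + Complex.I * x - 1) * ((1:ℂ) - t) ^ (1 - Complex.I * x - 1)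
      = g t := by
    intro t
    rw [hg]
    norm_num
  have hbeta : Complex.betaIntegral (1 + Complex.I * x) (1 - Complex.I * x)
      = ∫ t in Ioo (0:ℝ) 1, g t := by
    rw [Complex.betaIntegral, intervalIntegral.integral_of_le zero_le_one,
      ← integral_Ioc_eq_integral_Ioo]
    exact setIntegral_congr_fun measurableSet_Ioc (fun t _ => hbeta_fun t)
  have hbconv : IntegrableOn g (Ioo 0 1) := by
    have := Complex.betaIntegral_convergent hu hv
    have := ((intervalIntegrable_iff_integrableOn_Ioc_of_le zero_le_one).mp this).mono_set
      Ioo_subset_Ioc_self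
    exact this.congr_fun (fun t _ => hbeta_fun t) measurableSet_Ioo
  have hGamma : Complex.Gamma (1 + Complex.I * x) * Complex.Gamma (1 - Complex.I * x)
      = Complex.betaIntegral (1 + Complex.I * x) (1 - Complex.I * x) := by
    rw [Complex.Gamma_mul_Gamma_eq_betaIntegral hu hv,
      show (1 + Complex.I * x) + (1 - Complex.I * x) = 2 by ring,
      show Complex.Gamma 2 = 1 by
        rw [show (2:ℂ) = 1 + 1 by norm_num, Complex.Gamma_add_one _ one_ne_zero,
          Complex.Gamma_one, mul_one], one_mul]
  obtain ⟨hiff, heq⟩ := gmap_subst hL f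
  constructor
  · rw [hiff]
    have h2 : IntegrableOn (fun t => K * g t) (Ioo 0 1) := hbconv.const_mul K
    exact h2.congr_fun hEq.symm measurableSet_Ioo
  · rw [heq, setIntegral_congr_fun measurableSet_Ioo hEq, MeasureTheory.integral_const_mul, hGamma, hbeta]

lemma final_id (x : ℝ) (hx : x ≠ 0) :
    Complex.Gamma (1 + Complex.I * x) * Complex.Gamma (1 - Complex.I * x)
      = (π : ℂ) * x / ((Real.sinh (π * x) : ℝ) : ℂ) := by
  have hIx : Complex.I * x ≠ 0 :=
    mul_ne_zero Complex.I_ne_zero (Complex.ofReal_ne_zero.mpr hx)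
  have h1 : Complex.Gamma (1 + Complex.I * x)
      = Complex.I * x * Complex.Gamma (Complex.I * x) := by
    rw [add_comm]; exact Complex.Gamma_add_one _ hIx
  have h2 : Complex.Gamma (Complex.I * x) * Complex.Gamma (1 - Complex.I * x)
      = (π : ℂ) / Complex.sin ((π : ℂ) * (Complex.I * x)) :=
    Complex.Gamma_mul_Gamma_one_sub _
  have h3 : Complex.sin ((π : ℂ) * (Complex.I * x))
      = ((Real.sinh (π * x) : ℝ) : ℂ) * Complex.I := by
    rw [show ((π : ℂ) * (Complex.I * x)) = ((π * x : ℝ) : ℂ) * Complex.I by push_cast; ring,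
      Complex.sin_mul_I, Complex.ofReal_sinh]
  have hs : ((Real.sinh (π * x) : ℝ) : ℂ) ≠ 0 := by
    exact_mod_cast Real.sinh_ne_zero.mpr (mul_ne_zero Real.pi_ne_zero hx)
  rw [h1, mul_assoc, h2, h3, ← mul_div_assoc,
    div_eq_div_iff (mul_ne_zero hs Complex.I_ne_zero) hs]
  ring


/-- Joint boundary-length moment computation: for every real `x`, the complex-valued double
integral `∫₀^∞ ∫₀^∞ L e^{−L} b^{ix}/(b+L)² db dL` (with `b^{ix} := exp(ix log b)`) converges
absolutely and equals `πx Γ(1+ix)/sinh(πx)`, where for `x = 0` the right-hand side is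
interpreted as its limit value `1`. The outer variable is `L = p.1` and the inner is `b = p.2`. -/
theorem double_integral_moment (x : ℝ) :
    IntegrableOn
      (fun p : ℝ × ℝ =>
        (p.1 : ℂ) * Complex.exp (-(p.1 : ℂ)) * Complex.exp (Complex.I * x * Real.log p.2)
          / ((p.2 : ℂ) + (p.1 : ℂ)) ^ 2)
      (Ioi (0 : ℝ) ×ˢ Ioi (0 : ℝ))
    ∧ ∫ p in Ioi (0 : ℝ) ×ˢ Ioi (0 : ℝ),
        (p.1 : ℂ) * Complex.exp (-(p.1 : ℂ)) * Complex.exp (Complex.I * x * Real.log p.2)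
          / ((p.2 : ℂ) + (p.1 : ℂ)) ^ 2
        = if x = 0 then 1
          else ((π : ℂ) * (x : ℂ) * Complex.Gamma (1 + Complex.I * x))
            / ((Real.sinh (π * x) : ℝ) : ℂ) := by
  set F : ℝ × ℝ → ℂ := fun p =>
    (p.1 : ℂ) * Complex.exp (-(p.1 : ℂ)) * Complex.exp (Complex.I * x * Real.log p.2)
      / ((p.2 : ℂ) + (p.1 : ℂ)) ^ 2 with hF
  set ν : Measure ℝ := volume.restrict (Ioi 0) with hν
  have hmeas : Measurable F := by
    apply Measurable.div
    · exact ((Complex.measurable_ofReal.comp measurable_fst).mul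
        (Complex.measurable_exp.comp (Complex.measurable_ofReal.comp measurable_fst).neg)).mul
        (Complex.measurable_exp.comp
          ((measurable_const.mul (Complex.measurable_ofReal.comp
            (Real.measurable_log.comp measurable_snd)))))
    · exact ((Complex.measurable_ofReal.comp measurable_snd).add
        (Complex.measurable_ofReal.comp measurable_fst)).pow measurable_const
  -- norm identity
  have hnorm : ∀ L ∈ Ioi (0:ℝ), ∀ b ∈ Ioi (0:ℝ),
      ‖F (L, b)‖ = (L * Real.exp (-L)) * (((b + L) ^ 2)⁻¹) := by
    intro L hL b hb
    rw [mem_Ioi] at hL hb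
    have hbL : (0:ℝ) < b + L := by linarith
    have hden : ((b:ℂ) + L) ^ 2 = (((b + L) ^ 2 : ℝ) : ℂ) := by push_cast; ring
    rw [hF]
    simp only [hden]
    rw [norm_div, norm_mul, norm_mul, Complex.norm_real, Complex.norm_real]
    simp [Complex.norm_exp, abs_of_pos hL, abs_of_pos (by positivity : (0:ℝ) < (b+L)^2),
      Real.norm_eq_abs, abs_of_pos hL]
    ring
  -- per-L integrability and inner integral value
  have hinner : ∀ L ∈ Ioi (0:ℝ),
      Integrable (fun b => F (L, b)) ν ∧
      ∫ b, F (L, b) ∂ν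
        = ((L:ℂ) * Complex.exp (-(L:ℂ))) * (Complex.exp (Complex.I * x * Real.log L) / L *
            (Complex.Gamma (1 + Complex.I * x) * Complex.Gamma (1 - Complex.I * x))) := by
    intro L hL
    rw [mem_Ioi] at hL
    obtain ⟨hint, hval⟩ := inner_int x hL
    have hfun : (fun b : ℝ => F (L, b)) = fun b =>
        ((L:ℂ) * Complex.exp (-(L:ℂ))) *
          (Complex.exp (Complex.I * x * Real.log b) / ((b:ℂ) + L) ^ 2) := by
      funext b; rw [hF]; simp only; ring
    constructor
    · rw [hfun]; exact hint.const_mul _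
    · rw [hfun, hν, MeasureTheory.integral_const_mul, hval]
  -- integrability of the norm integral
  have hnormint : ∀ L ∈ Ioi (0:ℝ), ∫ b, ‖F (L, b)‖ ∂ν = Real.exp (-L) := by
    intro L hL
    have hL' := hL
    rw [mem_Ioi] at hL'
    rw [hν, setIntegral_congr_fun measurableSet_Ioi (fun b hb => hnorm L hL b hb),
      MeasureTheory.integral_const_mul, (norm_int hL').2]
    field_simp
  have hexp : IntegrableOn (fun L : ℝ => Real.exp (-L)) (Ioi 0) := by
    simpa using exp_neg_integrableOn_Ioi 0 one_pos
  -- product integrability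
  have key : Integrable F (ν.prod ν) := by
    rw [MeasureTheory.integrable_prod_iff (hmeas.aestronglyMeasurable)]
    constructor
    · exact (ae_restrict_iff' measurableSet_Ioi).mpr
        (Filter.Eventually.of_forall fun L hL => (hinner L hL).1)
    · exact (hexp.congr_fun (fun L hL => (hnormint L hL).symm) measurableSet_Ioi : _)
  have hrestrict : (volume : Measure (ℝ × ℝ)).restrict (Ioi (0:ℝ) ×ˢ Ioi (0:ℝ)) = ν.prod ν := by
    rw [hν, Measure.prod_restrict, ← Measure.volume_eq_prod]
  constructor
  · rw [IntegrableOn, hrestrict]; exact key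
  · rw [show ∫ p in Ioi (0:ℝ) ×ˢ Ioi (0:ℝ), F p = ∫ p, F p ∂(ν.prod ν) by rw [← hrestrict],
      MeasureTheory.integral_prod _ key]
    set CΓ : ℂ := Complex.Gamma (1 + Complex.I * x) * Complex.Gamma (1 - Complex.I * x) with hCΓ
    have houter : ∀ L ∈ Ioi (0:ℝ),
        (∫ b, F (L, b) ∂ν)
          = CΓ * ((Real.exp (-L) : ℝ) * (L:ℂ) ^ ((1 + Complex.I * x) - 1)) := by
      intro L hL
      have hL' := hL
      rw [mem_Ioi] at hL'
      rw [(hinner L hL).2]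
      have hLne : (L:ℂ) ≠ 0 := Complex.ofReal_ne_zero.mpr hL'.ne'
      have hcp : (L:ℂ) ^ ((1 + Complex.I * x) - 1) = Complex.exp (Complex.I * x * Real.log L) := by
        rw [show (1 + Complex.I * x) - 1 = Complex.I * x by ring,
          Complex.cpow_def_of_ne_zero hLne, ← Complex.ofReal_log hL'.le, mul_comm]
      rw [hcp, show ((Real.exp (-L) : ℝ) : ℂ) = Complex.exp (-(L:ℂ)) by
        rw [Complex.ofReal_exp]; push_cast; ring]
      field_simp
    rw [hν, setIntegral_congr_fun measurableSet_Ioi houter, MeasureTheory.integral_const_mul]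
    have hGint : ∫ L in Ioi (0:ℝ), ((Real.exp (-L) : ℝ) : ℂ) * (L:ℂ) ^ ((1 + Complex.I * x) - 1)
        = Complex.Gamma (1 + Complex.I * x) := by
      rw [Complex.Gamma_eq_integral (by simp : 0 < (1 + Complex.I * x).re)]
      rfl
    rw [hGint]
    by_cases hx : x = 0
    · subst hx
      simp [hCΓ, Complex.Gamma_one]
    · rw [if_neg hx, hCΓ, final_id x hx]
      rw [div_mul_eq_mul_div]
end
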